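/- With E_K = (R + BᵀP_K B)K − BᵀP_K A and R + BᵀP_K B positive definite, the advantage satisfies A_{K,K′}(x) ≥ −Tr[x xᵀ E_Kᵀ (R + BᵀP_K B)^{-1} E_K] for every x ∈ R^d and every K′, where A_{K,K′}(x) = 2 xᵀ(K′−K)ᵀE_K x + xᵀ(K′−K)ᵀ(R + BᵀP_K B)(K′−K)x. -/

import Mathlib

open Matrix

lemma trace_vecMulVec_mul {d : ℕ} (x : Fin d → ℝ) (N : Matrix (Fin d) (Fin d) ℝ) :
    (vecMulVec x x * N).trace = x ⬝ᵥ N.mulVec x := by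
  simp only [trace, diag, mul_apply, vecMulVec_apply, dotProduct, mulVec]
  rw [Finset.sum_comm]
  simp [Finset.mul_sum, dotProduct]
  ring_nf
  apply Finset.sum_congr rfl; intro i _
  apply Finset.sum_congr rfl; intro j _
  ring

lemma dot_transpose_mul {d k : ℕ} (x : Fin d → ℝ) (C D : Matrix (Fin k) (Fin d) ℝ) :
    x ⬝ᵥ (Cᵀ * D).mulVec x = C.mulVec x ⬝ᵥ D.mulVec x := by
  rw [← mulVec_mulVec, dotProduct_mulVec, vecMul_transpose]

/-- Lower bound on the advantage:
`A_{K,K'}(x) ≥ −Tr[xxᵀ E_Kᵀ (R + BᵀP_K B)⁻¹ E_K]`. -/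
theorem advantage_lower_bound
    (d k : ℕ)
    (A : Matrix (Fin d) (Fin d) ℝ) (B : Matrix (Fin d) (Fin k) ℝ)
    (K K' : Matrix (Fin k) (Fin d) ℝ)
    (R : Matrix (Fin k) (Fin k) ℝ) (P : Matrix (Fin d) (Fin d) ℝ)
    (hR : R.PosDef) (hP : P.PosSemidef)
    (x : Fin d → ℝ) :
    2 * (x ⬝ᵥ ((K' - K)ᵀ * ((R + Bᵀ * P * B) * K - Bᵀ * P * A)).mulVec x)
      + x ⬝ᵥ ((K' - K)ᵀ * (R + Bᵀ * P * B) * (K' - K)).mulVec x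
    ≥ - (vecMulVec x x * ((R + Bᵀ * P * B) * K - Bᵀ * P * A)ᵀ *
          (R + Bᵀ * P * B)⁻¹ * ((R + Bᵀ * P * B) * K - Bᵀ * P * A)).trace := by
  set M := R + Bᵀ * P * B with hMdef
  set E := M * K - Bᵀ * P * A with hEdef
  have hM : M.PosDef := by
    have h1 : (Bᵀ * P * B).PosSemidef := by
      have := hP.conjTranspose_mul_mul_same B
      simpa [conjTranspose_eq_transpose_of_trivial, Matrix.mul_assoc] using this
    exact hR.add_posSemidef h1
  have hMsymm : Mᵀ = M := hM.isHermitian.eq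
  have hdet : IsUnit M.det := isUnit_iff_ne_zero.mpr (ne_of_gt hM.det_pos)
  have hMinv : M * M⁻¹ = 1 := Matrix.mul_nonsing_inv M hdet
  set y := (K' - K).mulVec x with hy
  set e := E.mulVec x with he
  -- rewrite trace
  have htr : (vecMulVec x x * Eᵀ * M⁻¹ * E).trace = e ⬝ᵥ M⁻¹.mulVec e := by
    rw [Matrix.mul_assoc, Matrix.mul_assoc, trace_vecMulVec_mul,
      dot_transpose_mul, ← mulVec_mulVec, ← he]
  have h1 : x ⬝ᵥ ((K' - K)ᵀ * E).mulVec x = y ⬝ᵥ e := dot_transpose_mul x _ _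
  have h2 : x ⬝ᵥ ((K' - K)ᵀ * M * (K' - K)).mulVec x = y ⬝ᵥ M.mulVec y := by
    rw [Matrix.mul_assoc, dot_transpose_mul, ← mulVec_mulVec]
  rw [h1, h2, htr]
  -- key inequality: 0 ≤ (y + M⁻¹e)ᵀ M (y + M⁻¹e)
  have hz := hM.posSemidef.dotProduct_mulVec_nonneg (y + M⁻¹.mulVec e)
  have hMME : M.mulVec (M⁻¹.mulVec e) = e := by
    rw [mulVec_mulVec, hMinv, one_mulVec]
  have hsym : (M⁻¹.mulVec e) ⬝ᵥ M.mulVec y = y ⬝ᵥ e := by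
    rw [dotProduct_mulVec, ← mulVec_transpose, hMsymm, hMME, dotProduct_comm]
  have hexp : (y + M⁻¹.mulVec e) ⬝ᵥ M.mulVec (y + M⁻¹.mulVec e)
      = y ⬝ᵥ M.mulVec y + 2 * (y ⬝ᵥ e) + e ⬝ᵥ M⁻¹.mulVec e := by
    rw [mulVec_add, dotProduct_add, add_dotProduct, add_dotProduct, hMME, hsym,
      dotProduct_comm (M⁻¹.mulVec e) e]
    ring
  rw [star_trivial, hexp] at hz
  linarith
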